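/- Let G be an alternating labeled graph on n vertices (k + l = n + 2, where k and l are the numbers of circles in the A-state and B-state). Then G is adequate if and only if G has no isolated vertices. -/

import Mathlib

open Matrix LaurentPolynomial
open scoped Classical

noncomputable section

def adjMatS {V : Type} (G : SimpleGraph V) (s : Finset V) : Matrix s s (ZMod 2) :=
  fun i j => if G.Adj i.1 j.1 then 1 else 0

def corankS {V : Type} (G : SimpleGraph V) (s : Finset V) : ℕ :=
  s.card - (adjMatS G s).rank

def adjMat {V : Type} [Fintype V] (G : SimpleGraph V) : Matrix V V (ZMod 2) :=
  fun i j => if G.Adj i j then 1 else 0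

def corankM {m : Type} [Fintype m] (M : Matrix m m (ZMod 2)) : ℕ :=
  Fintype.card m - M.rank

def alphaCount {V : Type} [Fintype V] (σ : V → Bool) (s : Finset V) : ℕ :=
  (s.filter (fun i => σ i = false)).card + ((sᶜ).filter (fun i => σ i = true)).card

def bracket {V : Type} [Fintype V] (G : SimpleGraph V) (σ : V → Bool) : LaurentPolynomial ℚ :=
  ∑ s : Finset V, T (2 * (alphaCount σ s : ℤ) - (Fintype.card V : ℤ)) *
    (-T 2 - T (-2)) ^ (corankS G s)

def lspan (p : LaurentPolynomial ℚ) : ℤ := (p.coeff.support.max.unbotD 0) - (p.coeff.support.min.untopD 0)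

def Bmat {V : Type} [Fintype V] (G : SimpleGraph V) (x : V) : Matrix V V (ZMod 2) :=
  adjMat G + 1 + Matrix.single x x 1

def writhe {V : Type} [Fintype V] (G : SimpleGraph V) (σ : V → Bool) : ℤ :=
  ∑ x, (-1 : ℤ) ^ (corankM (Bmat G x)) * (if σ x then 1 else -1)

def extAdj {V : Type} (G : SimpleGraph V) (N : Set V) : V ⊕ Bool → V ⊕ Bool → Prop
  | .inl i, .inl j => G.Adj i j
  | .inl i, .inr _ => i ∈ N
  | .inr _, .inl j => j ∈ N
  | .inr _, .inr _ => False

def ext2 {V : Type} (G : SimpleGraph V) (N : Set V) : SimpleGraph (V ⊕ Bool) where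
  Adj := extAdj G N
  symm := ⟨by
    rintro (i|b) (j|c) h
    · exact G.adj_symm h
    · exact h
    · exact h
    · exact h⟩
  loopless := ⟨by
    rintro (i|b) h
    · exact G.irrefl h
    · exact h⟩

def optExt {V : Type} (G : SimpleGraph V) : SimpleGraph (Option V) where
  Adj x y := match x, y with
    | some i, some j => G.Adj i j
    | _, _ => False
  symm := ⟨by
    rintro (_|i) (_|j) h
    · exact h
    · exact h
    · exact h
    · exact G.adj_symm h⟩
  loopless := ⟨by
    rintro (_|i) h
    · exact h
    · exact G.irrefl h⟩


lemma adjMatS_eq_zero_iff {V : Type} (G : SimpleGraph V) (s : Finset V) :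
    adjMatS G s = 0 ↔ ∀ i ∈ s, ∀ j ∈ s, ¬ G.Adj i j := by
  constructor
  · intro h i hi j hj hadj
    have := congrFun (congrFun h ⟨i, hi⟩) ⟨j, hj⟩
    simp [adjMatS, hadj] at this
  · intro h
    funext i j
    simp [adjMatS, h i.1 i.2 j.1 j.2]

lemma matrank0 {m : Type} [Fintype m] (M : Matrix m m (ZMod 2)) :
    M.rank = 0 ↔ M = 0 := by
  constructor
  · intro h
    by_contra hM
    obtain ⟨i, hi⟩ : ∃ i, M i ≠ 0 := by
      by_contra h'; push_neg at h'; exact hM (funext h')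
    obtain ⟨j, hj⟩ : ∃ j, M i j ≠ 0 := by
      by_contra h'; push_neg at h'; exact hi (funext h')
    have hv : M.mulVecLin (Pi.single j 1) ≠ 0 := by
      intro h0
      have := congrFun h0 i
      simp [Matrix.mulVecLin_apply, Matrix.mulVec, dotProduct,
        Pi.single_apply, mul_ite] at this
      exact hj this
    have hpos : 0 < M.rank := by
      rw [Matrix.rank, Module.finrank_pos_iff_exists_ne_zero]
      refine ⟨⟨M.mulVecLin (Pi.single j 1), LinearMap.mem_range_self _ _⟩, ?_⟩
      intro h0
      exact hv (by simpa using congrArg Subtype.val h0)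
    omega
  · intro h; rw [h]; exact Matrix.rank_zero

lemma corankS_of_indep {V : Type} (G : SimpleGraph V) (s : Finset V)
    (h : ∀ i ∈ s, ∀ j ∈ s, ¬ G.Adj i j) : corankS G s = s.card := by
  unfold corankS
  rw [(matrank0 _).2 ((adjMatS_eq_zero_iff G s).2 h), Nat.sub_zero]

lemma symmDiff_singleton_not_mem {V : Type} (s : Finset V) {x : V} (h : x ∉ s) :
    symmDiff s {x} = insert x s := by
  ext y
  by_cases hyx : y = x <;>
    simp [Finset.mem_symmDiff, Finset.mem_insert, hyx, h]

lemma symmDiff_singleton_mem {V : Type} (s : Finset V) {x : V} (h : x ∈ s) :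
    symmDiff s {x} = s.erase x := by
  ext y
  by_cases hyx : y = x <;>
    simp [Finset.mem_symmDiff, Finset.mem_erase, hyx, h]

lemma key_side {V : Type} [Fintype V] (G : SimpleGraph V) (A C : Finset V)
    (hcomp : ∀ x, x ∈ C ↔ x ∉ A)
    (hA : ∀ i ∈ A, ∀ j ∈ A, ¬ G.Adj i j)
    (hC : ∀ i ∈ C, ∀ j ∈ C, ¬ G.Adj i j) :
    (∀ x : V, corankS G (symmDiff A {x}) ≠ corankS G A + 1) ↔
      (∀ x ∈ C, ∃ y, G.Adj x y) := by
  have hcA : corankS G A = A.card := corankS_of_indep G A hA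
  constructor
  · intro h x hxC
    by_contra hn
    push_neg at hn
    have hxA : x ∉ A := (hcomp x).1 hxC
    apply h x
    rw [symmDiff_singleton_not_mem A hxA, hcA]
    rw [corankS_of_indep G _ ?_, Finset.card_insert_of_notMem hxA]
    intro i hi j hj hadj
    rcases Finset.mem_insert.1 hi with rfl | hi
    · exact hn _ hadj
    · rcases Finset.mem_insert.1 hj with rfl | hj
      · exact hn _ hadj.symm
      · exact hA i hi j hj hadj
  · intro h x
    by_cases hxA : x ∈ A
    · rw [symmDiff_singleton_mem A hxA, hcA]
      rw [corankS_of_indep G _ (fun i hi j hj => hA i (Finset.mem_of_mem_erase hi)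
        j (Finset.mem_of_mem_erase hj))]
      have hc1 : 1 ≤ A.card := Finset.card_pos.2 ⟨x, hxA⟩
      have := Finset.card_erase_of_mem hxA
      omega
    · obtain ⟨y, hxy⟩ := h x ((hcomp x).2 hxA)
      have hyA : y ∈ A := by
        by_contra hyA
        exact hC x ((hcomp x).2 hxA) y ((hcomp y).2 hyA) hxy
      rw [symmDiff_singleton_not_mem A hxA, hcA]
      unfold corankS
      have hne : adjMatS G (insert x A) ≠ 0 := by
        intro h0
        exact (adjMatS_eq_zero_iff G _).1 h0 x (Finset.mem_insert_self x A)
          y (Finset.mem_insert_of_mem hyA) hxy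
      have hrk : (adjMatS G (insert x A)).rank ≠ 0 := fun h0 => hne ((matrank0 _).1 h0)
      have hcard := Finset.card_insert_of_notMem hxA
      omega

/-- An alternating labeled graph is adequate iff it has no isolated vertices. -/
theorem alternating_adequate_iff {V : Type} [Fintype V] (G : SimpleGraph V)
    (σ : V → Bool)
    (halt : corankS G (Finset.univ.filter (fun i => σ i = false)) +
      corankS G (Finset.univ.filter (fun i => σ i = true)) = Fintype.card V) :
    ((∀ x : V, corankS G (symmDiff (Finset.univ.filter (fun i => σ i = false)) {x}) ≠
        corankS G (Finset.univ.filter (fun i => σ i = false)) + 1) ∧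
     (∀ x : V, corankS G (symmDiff (Finset.univ.filter (fun i => σ i = true)) {x}) ≠
        corankS G (Finset.univ.filter (fun i => σ i = true)) + 1)) ↔
    (∀ x : V, ∃ y : V, G.Adj x y) := by
  classical
  set F := Finset.univ.filter (fun i => σ i = false) with hFdef
  set B := Finset.univ.filter (fun i => σ i = true) with hBdef
  have hmemF : ∀ x, x ∈ F ↔ σ x = false := by intro x; simp [hFdef]
  have hmemB : ∀ x, x ∈ B ↔ σ x = true := by intro x; simp [hBdef]
  have hcompF : ∀ x, x ∈ B ↔ x ∉ F := by
    intro x; cases hx : σ x <;> simp [hmemF, hmemB, hx]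
  have hcompB : ∀ x, x ∈ F ↔ x ∉ B := by
    intro x; cases hx : σ x <;> simp [hmemF, hmemB, hx]
  have hcard : F.card + B.card = Fintype.card V := by
    have : Fᶜ = B := by
      ext x
      simp only [Finset.mem_compl]
      rw [hcompF x]
    rw [← this]
    simp
  have hrleF : (adjMatS G F).rank ≤ F.card := by
    simpa [Fintype.card_coe] using (adjMatS G F).rank_le_card_width
  have hrleB : (adjMatS G B).rank ≤ B.card := by
    simpa [Fintype.card_coe] using (adjMatS G B).rank_le_card_width
  have h0 : (adjMatS G F).rank = 0 ∧ (adjMatS G B).rank = 0 := by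
    unfold corankS at halt
    omega
  have hMF : ∀ i ∈ F, ∀ j ∈ F, ¬ G.Adj i j :=
    (adjMatS_eq_zero_iff G F).1 ((matrank0 _).1 h0.1)
  have hMB : ∀ i ∈ B, ∀ j ∈ B, ¬ G.Adj i j :=
    (adjMatS_eq_zero_iff G B).1 ((matrank0 _).1 h0.2)
  rw [key_side G F B hcompF hMF hMB, key_side G B F hcompB hMB hMF]
  constructor
  · rintro ⟨h1, h2⟩ x
    by_cases hx : x ∈ F
    · exact h2 x hx
    · exact h1 x ((hcompF x).2 hx)
  · intro h
    exact ⟨fun x _ => h x, fun x _ => h x⟩
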